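/- There exists δ > 0 small enough — in particular any δ ≤ (A_c/2)·[(|λ|²/(2r₁) + 1 + (r₂/r₁)|λ⁻¹|²)(sup_{t≥0} T_t)² + 2|A|²|λ⁻¹|²]⁻¹, where A_c > 0 is the coercivity constant of A — together with constants a, b, c, d > 0, such that for all t ≥ 0 and all (x,y,z): a(|x|² + |y|² + |z|²) − d ≤ R(x,y,z,T_t) ≤ b(|x|² + |y|² + |z|²) + d, and L_t(R(·,·,·,T_t))(x,y,z) ≤ −c·T_t·R(x,y,z,T_t) + d. -/

import Mathlib

noncomputable section

open Real MeasureTheory Filter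

/-- The state space ℝⁿ × ℝⁿ × ℝᵐ. -/
abbrev St (n m : ℕ) := (Fin n → ℝ) × (Fin n → ℝ) × (Fin m → ℝ)

/-- `i`-th component of the gradient of a function on ℝᵏ. -/
def gradp {k : ℕ} (U : (Fin k → ℝ) → ℝ) (x : Fin k → ℝ) (i : Fin k) : ℝ :=
  fderiv ℝ U x (Pi.single i 1)

/-- Partial derivative in the `i`-th x-coordinate. -/
def pX {n m : ℕ} (f : St n m → ℝ) (i : Fin n) (p : St n m) : ℝ :=
  fderiv ℝ f p (Pi.single i 1, 0, 0)

/-- Partial derivative in the `i`-th y-coordinate. -/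
def pY {n m : ℕ} (f : St n m → ℝ) (i : Fin n) (p : St n m) : ℝ :=
  fderiv ℝ f p (0, Pi.single i 1, 0)

/-- Partial derivative in the `j`-th z-coordinate. -/
def pZ {n m : ℕ} (f : St n m → ℝ) (j : Fin m) (p : St n m) : ℝ :=
  fderiv ℝ f p (0, 0, Pi.single j 1)

/-- Squared Euclidean norm of a vector. -/
def sqnorm {k : ℕ} (v : Fin k → ℝ) : ℝ := ∑ i, (v i) ^ 2

/-- Squared Euclidean norm of the full gradient. -/
def gradSq {n m : ℕ} (f : St n m → ℝ) (p : St n m) : ℝ :=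
  (∑ i, (pX f i p) ^ 2) + (∑ i, (pY f i p) ^ 2) + (∑ j, (pZ f j p) ^ 2)

/-- The Hamiltonian W(x,y,z) = U(x) + |y|²/2 + |z|²/2. -/
def Wfun {n m : ℕ} (U : (Fin n → ℝ) → ℝ) (p : St n m) : ℝ :=
  U p.1 + sqnorm p.2.1 / 2 + sqnorm p.2.2 / 2

/-- Normalizing constant Z_T. -/
def Zpart (n m : ℕ) (U : (Fin n → ℝ) → ℝ) (T : ℝ) : ℝ :=
  ∫ p : St n m, Real.exp (-(Wfun U p) / T)

/-- Density of the instantaneous equilibrium μ_T w.r.t. Lebesgue. -/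
def muDen (n m : ℕ) (U : (Fin n → ℝ) → ℝ) (T : ℝ) (p : St n m) : ℝ :=
  Real.exp (-(Wfun U p) / T) / Zpart n m U T

/-- The Gibbs measure μ_T ∝ exp(−W/T). -/
def muT (n m : ℕ) (U : (Fin n → ℝ) → ℝ) (T : ℝ) : Measure (St n m) :=
  volume.withDensity fun p => ENNReal.ofReal (muDen n m U T p)

/-- Generator of the generalised Langevin dynamics at temperature T. -/
def genL {n m : ℕ} (U : (Fin n → ℝ) → ℝ) (A : Matrix (Fin m) (Fin m) ℝ)
    (lam : Matrix (Fin m) (Fin n) ℝ) (T : ℝ) (f : St n m → ℝ) (p : St n m) : ℝ :=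
  (∑ i, p.2.1 i * pX f i p)
    - (∑ i, gradp U p.1 i * pY f i p)
    + (∑ i, (lam.transpose.mulVec p.2.2) i * pY f i p)
    - (∑ j, (lam.mulVec p.2.1) j * pZ f j p)
    - T⁻¹ * (∑ j, (A.transpose.mulVec p.2.2) j * pZ f j p)
    + (∑ i, ∑ j, A i j * pZ (fun q => pZ f j q) i p)

/-- Formal L²(μ_T)-adjoint of the generator. -/
def genLstar {n m : ℕ} (U : (Fin n → ℝ) → ℝ) (A : Matrix (Fin m) (Fin m) ℝ)
    (lam : Matrix (Fin m) (Fin n) ℝ) (T : ℝ) (h : St n m → ℝ) (p : St n m) : ℝ :=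
  -(∑ i, p.2.1 i * pX h i p)
    + (∑ i, gradp U p.1 i * pY h i p)
    - (∑ i, (lam.transpose.mulVec p.2.2) i * pY h i p)
    + (∑ j, (lam.mulVec p.2.1) j * pZ h j p)
    - T⁻¹ * (∑ j, (A.mulVec p.2.2) j * pZ h j p)
    + (∑ i, ∑ j, A i j * pZ (fun q => pZ h j q) i p)

/-- Formal Lebesgue adjoint L_T^⊤ (Fokker–Planck operator). -/
def genLadj {n m : ℕ} (U : (Fin n → ℝ) → ℝ) (A : Matrix (Fin m) (Fin m) ℝ)
    (lam : Matrix (Fin m) (Fin n) ℝ) (T : ℝ) (g : St n m → ℝ) (p : St n m) : ℝ :=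
  -(∑ i, p.2.1 i * pX g i p)
    + (∑ i, (gradp U p.1 i - (lam.transpose.mulVec p.2.2) i) * pY g i p)
    + (∑ j, ((lam.mulVec p.2.1) j + T⁻¹ * (A.transpose.mulVec p.2.2) j) * pZ g j p)
    + T⁻¹ * A.trace * g p
    + (∑ i, ∑ j, A i j * pZ (fun q => pZ g j q) i p)

/-- Operator norm of a matrix (Euclidean → Euclidean). -/
def opNorm {a b : ℕ} (M : Matrix (Fin a) (Fin b) ℝ) : ℝ :=
  sSup {c : ℝ | ∃ v : Fin b → ℝ, sqnorm v ≤ 1 ∧ c = Real.sqrt (sqnorm (M.mulVec v))}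

/-- The Lyapunov function R(x,y,z,T). -/
def Rfun {n m : ℕ} (U : (Fin n → ℝ) → ℝ) (lamInv : Matrix (Fin n) (Fin m) ℝ)
    (δ T : ℝ) (p : St n m) : ℝ :=
  Wfun U p + δ * T * ((∑ i, p.2.1 i * (lamInv.mulVec p.2.2) i) + (∑ i, p.1 i * p.2.1 i) / 2)

/-- Full gradient indexed by x-, y-, z-coordinates. -/
def fullGrad {n m : ℕ} (f : St n m → ℝ) (p : St n m) : (Fin n ⊕ (Fin n ⊕ Fin m)) → ℝ :=
  Sum.elim (fun i => pX f i p) (Sum.elim (fun i => pY f i p) (fun j => pZ f j p))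

/-- Gateaux derivative dΦ(h).g of a map on functions. -/
def gateaux {n m : ℕ} (Φ : (St n m → ℝ) → St n m → ℝ) (h g : St n m → ℝ) (p : St n m) : ℝ :=
  deriv (fun s : ℝ => Φ (fun q => h q + s * g q) p) 0

/-- Γ_{L_T*,Φ}(h) := ½ (L_T*(Φ(h)) − dΦ(h).(L_T* h)). -/
def GammaPhi {n m : ℕ} (U : (Fin n → ℝ) → ℝ) (A : Matrix (Fin m) (Fin m) ℝ)
    (lam : Matrix (Fin m) (Fin n) ℝ) (T : ℝ)
    (Φ : (St n m → ℝ) → St n m → ℝ) (h : St n m → ℝ) (p : St n m) : ℝ :=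
  (genLstar U A lam T (Φ h) p - gateaux Φ h (genLstar U A lam T h) p) / 2

/-- Φ₁(h) = |2∇ₓh + 8S₀(∇_y h + λ⁻¹∇_z h)|²/h. -/
def Phi1 {n m : ℕ} (lamInv : Matrix (Fin n) (Fin m) ℝ) (S0 : ℝ)
    (g : St n m → ℝ) (p : St n m) : ℝ :=
  (∑ i, (2 * pX g i p + 8 * S0 * (pY g i p + (lamInv.mulVec fun j => pZ g j p) i)) ^ 2) / g p

/-- Φ₂(h) = |∇_y h + S₁λ⁻¹∇_z h|²/h. -/
def Phi2 {n m : ℕ} (lamInv : Matrix (Fin n) (Fin m) ℝ) (S1 : ℝ)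
    (g : St n m → ℝ) (p : St n m) : ℝ :=
  (∑ i, (pY g i p + S1 * (lamInv.mulVec fun j => pZ g j p) i) ^ 2) / g p

/-- β(s) = 1 + β₀ + β₁ s + β₂ s². -/
def betaP (β0 β1 β2 s : ℝ) : ℝ := 1 + β0 + β1 * s + β2 * s ^ 2

/-- Ψ_T(h) = Φ₁(h) + Φ₂(h) + β·h ln h. -/
def PsiT {n m : ℕ} (lamInv : Matrix (Fin n) (Fin m) ℝ) (S0 S1 βc : ℝ)
    (g : St n m → ℝ) (p : St n m) : ℝ :=
  Phi1 lamInv S0 g p + Phi2 lamInv S1 g p + βc * (g p * Real.log (g p))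

/-- λ̂² = max(|λ|², |λᵀ|², |λ⁻¹|², |λ⁻¹||λᵀ|). -/
def lamhatSq {n m : ℕ} (lam : Matrix (Fin m) (Fin n) ℝ)
    (lamInv : Matrix (Fin n) (Fin m) ℝ) : ℝ :=
  max (max (opNorm lam ^ 2) (opNorm lam.transpose ^ 2))
    (max (opNorm lamInv ^ 2) (opNorm lamInv * opNorm lam.transpose))

-- coordinate CLMs
def cxL (n m : ℕ) (i : Fin n) : St n m →L[ℝ] ℝ :=
  (ContinuousLinearMap.proj i).comp (ContinuousLinearMap.fst ℝ _ _)
def cyL (n m : ℕ) (i : Fin n) : St n m →L[ℝ] ℝ :=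
  (ContinuousLinearMap.proj i).comp ((ContinuousLinearMap.fst ℝ _ _).comp (ContinuousLinearMap.snd ℝ _ _))
def czL (n m : ℕ) (j : Fin m) : St n m →L[ℝ] ℝ :=
  (ContinuousLinearMap.proj j).comp ((ContinuousLinearMap.snd ℝ _ _).comp (ContinuousLinearMap.snd ℝ _ _))

lemma cxL_apply {n m : ℕ} (i : Fin n) (v : St n m) : cxL n m i v = v.1 i := rfl
lemma cyL_apply {n m : ℕ} (i : Fin n) (v : St n m) : cyL n m i v = v.2.1 i := rfl
lemma czL_apply {n m : ℕ} (j : Fin m) (v : St n m) : czL n m j v = v.2.2 j := rfl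

lemma hdX {n m : ℕ} (i : Fin n) (p : St n m) : HasFDerivAt (fun q : St n m => q.1 i) (cxL n m i) p :=
  (cxL n m i).hasFDerivAt
lemma hdY {n m : ℕ} (i : Fin n) (p : St n m) : HasFDerivAt (fun q : St n m => q.2.1 i) (cyL n m i) p :=
  (cyL n m i).hasFDerivAt
lemma hdZ {n m : ℕ} (j : Fin m) (p : St n m) : HasFDerivAt (fun q : St n m => q.2.2 j) (czL n m j) p :=
  (czL n m j).hasFDerivAt

def DR {n m : ℕ} (U : (Fin n → ℝ) → ℝ) (lamInv : Matrix (Fin n) (Fin m) ℝ)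
    (δ T : ℝ) (p : St n m) : St n m →L[ℝ] ℝ :=
  ((fderiv ℝ U p.1).comp (ContinuousLinearMap.fst ℝ _ _)
   + (2:ℝ)⁻¹ • (∑ i, (p.2.1 i • cyL n m i + p.2.1 i • cyL n m i))
   + (2:ℝ)⁻¹ • (∑ j, (p.2.2 j • czL n m j + p.2.2 j • czL n m j)))
  + (δ * T) • ((∑ i, (p.2.1 i • (∑ j, lamInv i j • czL n m j)
        + (∑ j, lamInv i j * p.2.2 j) • cyL n m i))
      + (2:ℝ)⁻¹ • (∑ i, (p.1 i • cyL n m i + p.2.1 i • cxL n m i)))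

lemma hasFDerivAt_Rfun {n m : ℕ} (U : (Fin n → ℝ) → ℝ) (hU : Differentiable ℝ U)
    (lamInv : Matrix (Fin n) (Fin m) ℝ) (δ T : ℝ) (p : St n m) :
    HasFDerivAt (Rfun U lamInv δ T) (DR U lamInv δ T p) p := by
  have hRe : Rfun U lamInv δ T = fun q : St n m =>
      ((U q.1 + (2:ℝ)⁻¹ * (∑ i, q.2.1 i * q.2.1 i) + (2:ℝ)⁻¹ * (∑ j, q.2.2 j * q.2.2 j))
       + δ * T * ((∑ i, q.2.1 i * (∑ j, lamInv i j * q.2.2 j)) + (2:ℝ)⁻¹ * (∑ i, q.1 i * q.2.1 i))) := by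
    funext q
    simp only [Rfun, Wfun, sqnorm, Matrix.mulVec, dotProduct, pow_two]
    ring
  rw [hRe]
  have hUc : HasFDerivAt (fun q : St n m => U q.1)
      ((fderiv ℝ U p.1).comp (ContinuousLinearMap.fst ℝ _ _)) p :=
    (hU p.1).hasFDerivAt.comp p hasFDerivAt_fst
  have hY : HasFDerivAt (fun q : St n m => (2:ℝ)⁻¹ * (∑ i, q.2.1 i * q.2.1 i))
      ((2:ℝ)⁻¹ • (∑ i, (p.2.1 i • cyL n m i + p.2.1 i • cyL n m i))) p :=
    (HasFDerivAt.fun_sum (fun i _ => (hdY i p).mul (hdY i p))).const_mul _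
  have hZ : HasFDerivAt (fun q : St n m => (2:ℝ)⁻¹ * (∑ j, q.2.2 j * q.2.2 j))
      ((2:ℝ)⁻¹ • (∑ j, (p.2.2 j • czL n m j + p.2.2 j • czL n m j))) p :=
    (HasFDerivAt.fun_sum (fun j _ => (hdZ j p).mul (hdZ j p))).const_mul _
  have hS1 : HasFDerivAt (fun q : St n m => (∑ i, q.2.1 i * (∑ j, lamInv i j * q.2.2 j)))
      (∑ i, (p.2.1 i • (∑ j, lamInv i j • czL n m j)
        + (∑ j, lamInv i j * p.2.2 j) • cyL n m i)) p :=
    HasFDerivAt.fun_sum (fun i _ =>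
      (hdY i p).mul (HasFDerivAt.fun_sum (fun j _ => (hdZ j p).const_mul (lamInv i j))))
  have hS2 : HasFDerivAt (fun q : St n m => (2:ℝ)⁻¹ * (∑ i, q.1 i * q.2.1 i))
      ((2:ℝ)⁻¹ • (∑ i, (p.1 i • cyL n m i + p.2.1 i • cxL n m i))) p :=
    (HasFDerivAt.fun_sum (fun i _ => (hdX i p).mul (hdY i p))).const_mul _
  exact ((hUc.add hY).add hZ).add ((hS1.add hS2).const_mul _)

lemma pX_Rfun {n m : ℕ} (U : (Fin n → ℝ) → ℝ) (hU : Differentiable ℝ U)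
    (lamInv : Matrix (Fin n) (Fin m) ℝ) (δ T : ℝ) (i : Fin n) (p : St n m) :
    pX (Rfun U lamInv δ T) i p = gradp U p.1 i + δ * T * (p.2.1 i / 2) := by
  rw [pX, (hasFDerivAt_Rfun U hU lamInv δ T p).fderiv]
  simp [DR, cxL, cyL, czL, gradp, Pi.single_apply, Finset.mul_sum, Finset.sum_ite_eq', Finset.sum_add_distrib, mul_add, mul_ite, mul_zero]
  ring_nf
  tauto

lemma pY_Rfun {n m : ℕ} (U : (Fin n → ℝ) → ℝ) (hU : Differentiable ℝ U)
    (lamInv : Matrix (Fin n) (Fin m) ℝ) (δ T : ℝ) (i : Fin n) (p : St n m) :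
    pY (Rfun U lamInv δ T) i p = p.2.1 i + δ * T * ((∑ j, lamInv i j * p.2.2 j) + p.1 i / 2) := by
  rw [pY, (hasFDerivAt_Rfun U hU lamInv δ T p).fderiv]
  simp [DR, cxL, cyL, czL, Pi.single_apply, Finset.mul_sum, Finset.sum_ite_eq', Finset.sum_add_distrib, mul_add, mul_ite, mul_zero]
  try ring

lemma pZ_Rfun {n m : ℕ} (U : (Fin n → ℝ) → ℝ) (hU : Differentiable ℝ U)
    (lamInv : Matrix (Fin n) (Fin m) ℝ) (δ T : ℝ) (j : Fin m) (p : St n m) :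
    pZ (Rfun U lamInv δ T) j p = p.2.2 j + δ * T * (∑ i, p.2.1 i * lamInv i j) := by
  rw [pZ, (hasFDerivAt_Rfun U hU lamInv δ T p).fderiv]
  simp [DR, cxL, cyL, czL, Pi.single_apply, Finset.mul_sum, Finset.sum_ite_eq',
    Finset.sum_add_distrib, mul_add, mul_ite, mul_zero]
  ring

lemma pZZ_Rfun {n m : ℕ} (U : (Fin n → ℝ) → ℝ) (hU : Differentiable ℝ U)
    (lamInv : Matrix (Fin n) (Fin m) ℝ) (δ T : ℝ) (i j : Fin m) (p : St n m) :
    pZ (fun q => pZ (Rfun U lamInv δ T) j q) i p = if i = j then 1 else 0 := by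
  have hfun : (fun q : St n m => pZ (Rfun U lamInv δ T) j q)
      = fun q : St n m => q.2.2 j + δ * T * (∑ i, lamInv i j * q.2.1 i) := by
    funext q
    rw [pZ_Rfun U hU lamInv δ T j q,
      Finset.sum_congr rfl fun x _ => mul_comm (q.2.1 x) (lamInv x j)]
  rw [pZ, hfun]
  have hD : HasFDerivAt (fun q : St n m => q.2.2 j + δ * T * (∑ i', lamInv i' j * q.2.1 i'))
      (czL n m j + (δ * T) • (∑ i', (lamInv i' j) • cyL n m i')) p :=
    (hdZ j p).add ((HasFDerivAt.fun_sum fun i' _ => (hdY i' p).const_mul (lamInv i' j)).const_mul (δ * T))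
  rw [hD.fderiv]
  simp [czL, cyL, Pi.single_apply, eq_comm]

lemma id_lam_swap {n m : ℕ} (lam : Matrix (Fin m) (Fin n) ℝ) (y : Fin n → ℝ) (z : Fin m → ℝ) :
    ∑ i, lam.transpose.mulVec z i * y i = ∑ j, lam.mulVec y j * z j := by
  simp only [Matrix.mulVec, dotProduct, Matrix.transpose_apply]
  rw [Finset.sum_congr rfl fun i (_ : i ∈ Finset.univ) => Finset.sum_mul Finset.univ _ _,
      Finset.sum_congr rfl fun j (_ : j ∈ Finset.univ) => Finset.sum_mul Finset.univ _ _,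
      Finset.sum_comm]
  exact Finset.sum_congr rfl fun j _ => Finset.sum_congr rfl fun i _ => by ring

lemma idA {n m : ℕ} (lam : Matrix (Fin m) (Fin n) ℝ) (lamInv : Matrix (Fin n) (Fin m) ℝ)
    (hlamInv : lamInv * lam = 1) (y : Fin n → ℝ) :
    ∑ j, lam.mulVec y j * (∑ i, y i * lamInv i j) = ∑ i, y i * y i := by
  have h1 : ∀ j : Fin m, lam.mulVec y j * (∑ i, y i * lamInv i j)
      = ∑ i, y i * (lamInv i j * lam.mulVec y j) := fun j => by
    rw [Finset.mul_sum]; exact Finset.sum_congr rfl fun i _ => by ring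
  rw [Finset.sum_congr rfl fun j _ => h1 j, Finset.sum_comm]
  refine Finset.sum_congr rfl fun i _ => ?_
  rw [← Finset.mul_sum]
  have h2 : ∑ j, lamInv i j * lam.mulVec y j = lamInv.mulVec (lam.mulVec y) i := rfl
  rw [h2, Matrix.mulVec_mulVec, hlamInv, Matrix.one_mulVec]

lemma pZlin {n m : ℕ} (lamInv : Matrix (Fin n) (Fin m) ℝ) (δ T : ℝ) (i j : Fin m) (p : St n m) :
    pZ (fun q : St n m => q.2.2 j + δ * T * ∑ i', q.2.1 i' * lamInv i' j) i p
      = if i = j then 1 else 0 := by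
  have hfun : (fun q : St n m => q.2.2 j + δ * T * ∑ i', q.2.1 i' * lamInv i' j)
      = fun q : St n m => q.2.2 j + δ * T * ∑ i', lamInv i' j * q.2.1 i' := by
    funext q
    rw [Finset.sum_congr rfl fun x (_ : x ∈ Finset.univ) => mul_comm (q.2.1 x) (lamInv x j)]
  rw [pZ, hfun]
  have hD : HasFDerivAt (fun q : St n m => q.2.2 j + δ * T * (∑ i', lamInv i' j * q.2.1 i'))
      (czL n m j + (δ * T) • (∑ i', (lamInv i' j) • cyL n m i')) p :=
    (hdZ j p).add ((HasFDerivAt.fun_sum fun i' _ => (hdY i' p).const_mul (lamInv i' j)).const_mul (δ * T))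
  rw [hD.fderiv]
  simp [czL, cyL, Pi.single_apply, eq_comm]

lemma genL_Rfun_eq {n m : ℕ} (U : (Fin n → ℝ) → ℝ) (hU : Differentiable ℝ U)
    (A : Matrix (Fin m) (Fin m) ℝ) (lam : Matrix (Fin m) (Fin n) ℝ)
    (lamInv : Matrix (Fin n) (Fin m) ℝ) (hlamInv : lamInv * lam = 1)
    (δ T : ℝ) (hT : T ≠ 0) (p : St n m) :
    genL U A lam T (Rfun U lamInv δ T) p =
      - δ * T * (∑ i, p.2.1 i * p.2.1 i) / 2
      - δ * T * (∑ i, gradp U p.1 i * ((lamInv.mulVec p.2.2) i + p.1 i / 2))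
      + δ * T * (∑ i, (lam.transpose.mulVec p.2.2) i * ((lamInv.mulVec p.2.2) i + p.1 i / 2))
      - T⁻¹ * (∑ j, (A.transpose.mulVec p.2.2) j * p.2.2 j)
      - δ * (∑ j, (A.transpose.mulVec p.2.2) j * (∑ i, p.2.1 i * lamInv i j))
      + A.trace := by
  simp only [genL, pX_Rfun U hU lamInv δ T, pY_Rfun U hU lamInv δ T,
    pZ_Rfun U hU lamInv δ T, pZZ_Rfun U hU lamInv δ T]
  have hmv : ∀ i, (∑ j, lamInv i j * p.2.2 j) = lamInv.mulVec p.2.2 i := fun i => rfl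
  simp only [hmv]
  have E1 : ∑ i, p.2.1 i * (gradp U p.1 i + δ * T * (p.2.1 i / 2))
      = (∑ i, gradp U p.1 i * p.2.1 i) + δ * T * (∑ i, p.2.1 i * p.2.1 i) / 2 := by
    rw [Finset.sum_congr rfl fun i (_ : i ∈ Finset.univ) =>
      (by ring : p.2.1 i * (gradp U p.1 i + δ * T * (p.2.1 i / 2))
        = gradp U p.1 i * p.2.1 i + δ * T * (p.2.1 i * p.2.1 i) / 2),
      Finset.sum_add_distrib, ← Finset.sum_div, ← Finset.mul_sum]
  have E2 : ∑ i, gradp U p.1 i * (p.2.1 i + δ * T * ((lamInv.mulVec p.2.2) i + p.1 i / 2))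
      = (∑ i, gradp U p.1 i * p.2.1 i)
        + δ * T * (∑ i, gradp U p.1 i * ((lamInv.mulVec p.2.2) i + p.1 i / 2)) := by
    rw [Finset.sum_congr rfl fun i (_ : i ∈ Finset.univ) =>
      (by ring : gradp U p.1 i * (p.2.1 i + δ * T * ((lamInv.mulVec p.2.2) i + p.1 i / 2))
        = gradp U p.1 i * p.2.1 i + δ * T * (gradp U p.1 i * ((lamInv.mulVec p.2.2) i + p.1 i / 2))),
      Finset.sum_add_distrib, ← Finset.mul_sum]
  have E3 : ∑ i, lam.transpose.mulVec p.2.2 i * (p.2.1 i + δ * T * ((lamInv.mulVec p.2.2) i + p.1 i / 2))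
      = (∑ j, lam.mulVec p.2.1 j * p.2.2 j)
        + δ * T * (∑ i, lam.transpose.mulVec p.2.2 i * ((lamInv.mulVec p.2.2) i + p.1 i / 2)) := by
    rw [Finset.sum_congr rfl fun i (_ : i ∈ Finset.univ) =>
      (by ring : lam.transpose.mulVec p.2.2 i * (p.2.1 i + δ * T * ((lamInv.mulVec p.2.2) i + p.1 i / 2))
        = lam.transpose.mulVec p.2.2 i * p.2.1 i
          + δ * T * (lam.transpose.mulVec p.2.2 i * ((lamInv.mulVec p.2.2) i + p.1 i / 2))),
      Finset.sum_add_distrib, ← Finset.mul_sum, id_lam_swap]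
  have E4 : ∑ j, lam.mulVec p.2.1 j * (p.2.2 j + δ * T * ∑ i, p.2.1 i * lamInv i j)
      = (∑ j, lam.mulVec p.2.1 j * p.2.2 j) + δ * T * (∑ i, p.2.1 i * p.2.1 i) := by
    rw [Finset.sum_congr rfl fun j (_ : j ∈ Finset.univ) =>
      (by ring : lam.mulVec p.2.1 j * (p.2.2 j + δ * T * ∑ i, p.2.1 i * lamInv i j)
        = lam.mulVec p.2.1 j * p.2.2 j
          + δ * T * (lam.mulVec p.2.1 j * ∑ i, p.2.1 i * lamInv i j)),
      Finset.sum_add_distrib, ← Finset.mul_sum,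
      Finset.sum_congr rfl fun j (_ : j ∈ Finset.univ) => rfl]
    rw [idA lam lamInv hlamInv]
  have E5 : T⁻¹ * ∑ j, A.transpose.mulVec p.2.2 j * (p.2.2 j + δ * T * ∑ i, p.2.1 i * lamInv i j)
      = T⁻¹ * (∑ j, A.transpose.mulVec p.2.2 j * p.2.2 j)
        + δ * (∑ j, A.transpose.mulVec p.2.2 j * (∑ i, p.2.1 i * lamInv i j)) := by
    rw [Finset.sum_congr rfl fun j (_ : j ∈ Finset.univ) =>
      (by ring : A.transpose.mulVec p.2.2 j * (p.2.2 j + δ * T * ∑ i, p.2.1 i * lamInv i j)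
        = A.transpose.mulVec p.2.2 j * p.2.2 j
          + δ * T * (A.transpose.mulVec p.2.2 j * ∑ i, p.2.1 i * lamInv i j)),
      Finset.sum_add_distrib, ← Finset.mul_sum, mul_add]
    congr 1
    field_simp
  have E6 : ∑ i, ∑ j, A i j * (if i = j then (1:ℝ) else 0) = A.trace := by
    simp [Matrix.trace, Matrix.diag, mul_ite, Finset.sum_ite_eq]
  simp only [pZlin]
  rw [E1, E2, E3, E4, E5, E6]
  ring

lemma sqnorm_nonneg {k : ℕ} (v : Fin k → ℝ) : 0 ≤ sqnorm v :=
  Finset.sum_nonneg fun i _ => sq_nonneg _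

lemma sqnorm_neg {k : ℕ} (v : Fin k → ℝ) : sqnorm (fun i => -v i) = sqnorm v := by
  simp [sqnorm]

lemma sum_self_eq_sqnorm {k : ℕ} (v : Fin k → ℝ) : ∑ i, v i * v i = sqnorm v := by
  simp [sqnorm, pow_two]

lemma sum_mul_le {k : ℕ} (v w : Fin k → ℝ) {ε : ℝ} (hε : 0 < ε) :
    ∑ i, v i * w i ≤ ε * sqnorm v + sqnorm w / (4 * ε) := by
  have h : ∀ i : Fin k, v i * w i ≤ ε * (v i)^2 + (w i)^2 / (4 * ε) := by
    intro i
    rw [← sub_le_iff_le_add', le_div_iff₀ (by linarith : (0:ℝ) < 4 * ε)]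
    nlinarith [sq_nonneg (2 * ε * v i - w i)]
  calc ∑ i, v i * w i ≤ ∑ i, (ε * (v i)^2 + (w i)^2 / (4 * ε)) := Finset.sum_le_sum fun i _ => h i
    _ = ε * sqnorm v + sqnorm w / (4 * ε) := by
        rw [Finset.sum_add_distrib, ← Finset.mul_sum, ← Finset.sum_div, sqnorm, sqnorm]

lemma sum_mul_ge {k : ℕ} (v w : Fin k → ℝ) {ε : ℝ} (hε : 0 < ε) :
    -(ε * sqnorm v + sqnorm w / (4 * ε)) ≤ ∑ i, v i * w i := by
  have h := sum_mul_le (fun i => -v i) w hε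
  rw [sqnorm_neg] at h
  have h2 : ∑ i, (-v i) * w i = -∑ i, v i * w i := by
    rw [← Finset.sum_neg_distrib]
    exact Finset.sum_congr rfl fun i _ => by ring
  rw [h2] at h
  linarith

lemma sum_mul_le₂ {k : ℕ} (v w : Fin k → ℝ) {ε : ℝ} (hε : 0 < ε) :
    ∑ i, v i * w i ≤ ε * sqnorm w + sqnorm v / (4 * ε) := by
  have h := sum_mul_le w v hε
  rw [Finset.sum_congr rfl fun i (_ : i ∈ Finset.univ) => mul_comm (v i) (w i)]
  exact h

lemma sum_mul_ge₂ {k : ℕ} (v w : Fin k → ℝ) {ε : ℝ} (hε : 0 < ε) :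
    -(ε * sqnorm w + sqnorm v / (4 * ε)) ≤ ∑ i, v i * w i := by
  have h := sum_mul_ge w v hε
  rw [Finset.sum_congr rfl fun i (_ : i ∈ Finset.univ) => mul_comm (v i) (w i)]
  exact h

def frobSq {a b : ℕ} (M : Matrix (Fin a) (Fin b) ℝ) : ℝ := ∑ i, ∑ j, (M i j)^2

lemma frobSq_nonneg {a b : ℕ} (M : Matrix (Fin a) (Fin b) ℝ) : 0 ≤ frobSq M :=
  Finset.sum_nonneg fun i _ => Finset.sum_nonneg fun j _ => sq_nonneg _

lemma sqnorm_mulVec_le {a b : ℕ} (M : Matrix (Fin a) (Fin b) ℝ) (v : Fin b → ℝ) :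
    sqnorm (M.mulVec v) ≤ frobSq M * sqnorm v := by
  have h : ∀ i : Fin a, (M.mulVec v i)^2 ≤ (∑ j, (M i j)^2) * sqnorm v := by
    intro i
    have : M.mulVec v i = ∑ j, M i j * v j := rfl
    rw [this, sqnorm]
    exact Finset.sum_mul_sq_le_sq_mul_sq Finset.univ _ _
  calc sqnorm (M.mulVec v) ≤ ∑ i, ((∑ j, (M i j)^2) * sqnorm v) :=
        Finset.sum_le_sum fun i _ => h i
    _ = frobSq M * sqnorm v := by rw [← Finset.sum_mul, frobSq]

lemma idB {m : ℕ} (A : Matrix (Fin m) (Fin m) ℝ) (z : Fin m → ℝ) :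
    ∑ j, A.transpose.mulVec z j * z j = ∑ j, z j * A.mulVec z j := by
  rw [id_lam_swap A z z]
  exact Finset.sum_congr rfl fun j _ => mul_comm _ _

lemma pos_aux (e1 e2 e3 ts : ℝ) (h1 : 0 ≤ e1) (h2 : 0 ≤ e2) (h3 : 0 ≤ e3) (h4 : 0 < ts) :
    0 < (e1 + 1 + e2) * ts ^ 2 + e3 := by nlinarith


set_option maxHeartbeats 1000000 in
/-- Lyapunov function for the annealed generalised Langevin generator. -/
theorem stmt1 (n m : ℕ) (hn : 0 < n) (hm : 0 < m) (hnm : n ≤ m)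
    (U : (Fin n → ℝ) → ℝ) (hU : ContDiff ℝ (⊤ : ℕ∞) U)
    (D2 : ℝ) (hD2 : ∀ x, ‖fderiv ℝ (fun y => fderiv ℝ U y) x‖ ≤ D2)
    (abar : Fin n → ℝ) (habar : ∀ i, 0 < abar i)
    (r1 r2 Ug : ℝ) (hr1 : 0 < r1) (hr2 : 0 < r2) (hUg : 0 < Ug) (Um UM : ℝ)
    (hUlow : ∀ x, sqnorm (fun i => abar i * x i) + Um ≤ U x)
    (hUup : ∀ x, U x ≤ sqnorm (fun i => abar i * x i) + UM)
    (hgrad1 : ∀ x, r1 * sqnorm x - Ug ≤ ∑ i, gradp U x i * x i)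
    (hgrad2 : ∀ x, sqnorm (gradp U x) ≤ r2 * sqnorm x + Ug)
    (A : Matrix (Fin m) (Fin m) ℝ) (Ac : ℝ) (hAc : 0 < Ac)
    (hApd : ∀ v : Fin m → ℝ, Ac * sqnorm v ≤ ∑ j, v j * A.mulVec v j)
    (lam : Matrix (Fin m) (Fin n) ℝ) (lamInv : Matrix (Fin n) (Fin m) ℝ)
    (hlamInv : lamInv * lam = 1)
    (T : ℝ → ℝ) (hTpos : ∀ t, 0 < T t) (hTdiff : ContDiff ℝ 1 T)
    (hTlim : Tendsto T atTop (nhds 0))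
    (E : ℝ) (hE : UM - Um < E)
    (hTlb : ∀ᶠ t in atTop, E / Real.log t ≤ T t)
    (Ttil : ℝ) (hTtil : 0 < Ttil)
    (hTder : ∀ᶠ t in atTop, -(Ttil / t) ≤ deriv T t ∧ deriv T t ≤ 0)
    (δ₀ : ℝ) (hδ₀ : 0 < δ₀) (hTconst : ∀ t ∈ Set.Icc (0:ℝ) δ₀, T t = T 0)
    :
    ∃ δ : ℝ, 0 < δ ∧
      δ ≤ Ac / 2 * ((opNorm lam ^ 2 / (2 * r1) + 1 + r2 / r1 * opNorm lamInv ^ 2) *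
          (sSup (T '' Set.Ici 0)) ^ 2 + 2 * opNorm A ^ 2 * opNorm lamInv ^ 2)⁻¹ ∧
      ∃ a b c d : ℝ, 0 < a ∧ 0 < b ∧ 0 < c ∧ 0 < d ∧
        ∀ t : ℝ, 0 ≤ t → ∀ p : St n m,
          (a * (sqnorm p.1 + sqnorm p.2.1 + sqnorm p.2.2) - d ≤ Rfun U lamInv δ (T t) p ∧
            Rfun U lamInv δ (T t) p ≤ b * (sqnorm p.1 + sqnorm p.2.1 + sqnorm p.2.2) + d) ∧
          genL U A lam (T t) (Rfun U lamInv δ (T t)) p ≤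
            -(c * T t) * Rfun U lamInv δ (T t) p + d := by
  classical
  have hUd : Differentiable ℝ U := hU.differentiable (by simp)
  haveI : Nonempty (Fin n) := Fin.pos_iff_nonempty.mp hn
  -- bound for the temperature schedule
  have h1 : ∀ᶠ t in atTop, T t < 1 := hTlim.eventually (gt_mem_nhds one_pos)
  obtain ⟨t₀, ht₀⟩ := eventually_atTop.mp h1
  obtain ⟨M, hM⟩ := (isCompact_Icc.image hTdiff.continuous).bddAbove
    (s := T '' Set.Icc 0 (max t₀ 0))
  have hbdd : BddAbove (T '' Set.Ici 0) := by
    refine ⟨max M 1, ?_⟩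
    rintro _ ⟨t, ht, rfl⟩
    by_cases h : t ≤ max t₀ 0
    · exact le_max_of_le_left (hM ⟨t, ⟨ht, h⟩, rfl⟩)
    · exact le_max_of_le_right
        (ht₀ t (le_trans (le_max_left _ _) (le_of_not_ge h))).le
  set Ts := sSup (T '' Set.Ici 0) with hTsdef
  have hle : ∀ t, 0 ≤ t → T t ≤ Ts := by
    intro t ht; rw [hTsdef]; exact le_csSup hbdd ⟨t, ht, rfl⟩
  clear_value Ts
  have hTs0 : 0 < Ts := lt_of_lt_of_le (hTpos 0) (hle 0 le_rfl)
  -- constants from abar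
  set am := Finset.univ.inf' Finset.univ_nonempty abar with hamdef
  set aM := Finset.univ.sup' Finset.univ_nonempty abar with haMdef
  have ham0 : 0 < am := by
    rw [hamdef]; exact (Finset.lt_inf'_iff _).mpr fun i _ => habar i
  have hamle : ∀ i, am ≤ abar i := by
    intro i; rw [hamdef]; exact Finset.inf'_le _ (Finset.mem_univ i)
  have haMge : ∀ i, abar i ≤ aM := by
    intro i; rw [haMdef]; exact Finset.le_sup' _ (Finset.mem_univ i)
  clear_value am aM
  have haM0 : 0 < aM := lt_of_lt_of_le (habar ⟨0, hn⟩) (haMge _)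
  -- Frobenius-type constants
  set F1 := frobSq lamInv with hF1def
  set F2t := frobSq lam.transpose with hF2tdef
  set F1t := frobSq lamInv.transpose with hF1tdef
  set FAt := frobSq A.transpose with hFAtdef
  have hF10 : 0 ≤ F1 := hF1def ▸ frobSq_nonneg _
  have hF2t0 : 0 ≤ F2t := hF2tdef ▸ frobSq_nonneg _
  have hF1t0 : 0 ≤ F1t := hF1tdef ▸ frobSq_nonneg _
  have hFAt0 : 0 ≤ FAt := hFAtdef ▸ frobSq_nonneg _
  set ε2 := r1 / (8 * r2) with hε2def
  have hε2 : 0 < ε2 := by rw [hε2def]; positivity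
  set C4 := 1 + F1 with hC4def
  have hC40 : (0:ℝ) < C4 := by rw [hC4def]; linarith only [hF10]
  set KZ2 := F1 / (4 * ε2) with hKZ2def
  have hKZ20 : 0 ≤ KZ2 := by
    rw [hKZ2def]; exact div_nonneg hF10 (by linarith only [hε2])
  set KZ3 := F2t / 2 + F1 / 2 + F2t / r1 / 2 with hKZ3def
  have hKZ30 : 0 ≤ KZ3 := by
    rw [hKZ3def]
    have := div_nonneg (div_nonneg hF2t0 hr1.le) (by norm_num : (0:ℝ) ≤ 2)
    linarith only [hF10, hF2t0, this]
  set KZ := KZ2 + KZ3 with hKZdef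
  have hKZ0 : 0 ≤ KZ := by rw [hKZdef]; linarith only [hKZ20, hKZ30]
  set CZ2 := 2 * (F1t + 1) * FAt with hCZ2def
  have hCZ20 : 0 ≤ CZ2 := by
    rw [hCZ2def]; exact mul_nonneg (by linarith only [hF1t0]) hFAt0
  set C0 := Ug / 2 + ε2 * Ug with hC0def
  have hC00 : 0 ≤ C0 := by
    rw [hC0def]
    have := mul_nonneg hε2.le hUg.le
    linarith only [hUg, this]
  clear_value F1 F2t F1t FAt ε2 C4 KZ2 KZ3 KZ CZ2 C0
  set amm := min (am ^ 2) (1 / 2 : ℝ) with hammdef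
  have hamm0 : 0 < amm := by
    rw [hammdef]; exact lt_min (pow_pos ham0 2) (by norm_num)
  have hamm1 : amm ≤ am ^ 2 := hammdef ▸ min_le_left _ _
  have hamm2 : amm ≤ 1 / 2 := hammdef ▸ min_le_right _ _
  clear_value amm
  -- choice of δ
  set B := Ac / 2 * ((opNorm lam ^ 2 / (2 * r1) + 1 + r2 / r1 * opNorm lamInv ^ 2) *
      Ts ^ 2 + 2 * opNorm A ^ 2 * opNorm lamInv ^ 2)⁻¹ with hBdef
  have hB0 : 0 < B := by
    have h2 : (0:ℝ) < (opNorm lam ^ 2 / (2 * r1) + 1 + r2 / r1 * opNorm lamInv ^ 2) *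
        Ts ^ 2 + 2 * opNorm A ^ 2 * opNorm lamInv ^ 2 :=
      pos_aux _ _ _ _ (by positivity) (by positivity) (by positivity) hTs0
    rw [hBdef]
    exact mul_pos (by linarith only [hAc]) (inv_pos.mpr h2)
  clear_value B
  set δ1 := amm / (2 * (Ts * C4 + 1)) with hδ1def
  set δ2 := Ac / (2 * (Ts ^ 2 * KZ + CZ2 + 1)) with hδ2def
  have hTsC4 : 0 < Ts * C4 + 1 := by
    have := mul_pos hTs0 hC40; linarith only [this]
  have hδ10 : 0 < δ1 := by
    rw [hδ1def]; exact div_pos hamm0 (by linarith only [hTsC4])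
  have hSZ0 : 0 ≤ Ts ^ 2 * KZ + CZ2 := by
    have := mul_nonneg (sq_nonneg Ts) hKZ0
    linarith only [this, hCZ20]
  have hδ20 : 0 < δ2 := by
    rw [hδ2def]; exact div_pos hAc (by linarith only [hSZ0])
  have he1 : δ1 * (2 * (Ts * C4 + 1)) = amm := by
    rw [hδ1def]; field_simp
  have he2 : δ2 * (2 * (Ts ^ 2 * KZ + CZ2 + 1)) = Ac := by
    rw [hδ2def]; field_simp
  clear_value δ1 δ2
  set δ := min B (min δ1 δ2) with hδdef
  have hδ0 : 0 < δ := hδdef ▸ lt_min hB0 (lt_min hδ10 hδ20)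
  have hδB : δ ≤ B := hδdef ▸ min_le_left _ _
  have hδδ1 : δ ≤ δ1 := hδdef ▸ le_trans (min_le_right _ _) (min_le_left _ _)
  have hδδ2 : δ ≤ δ2 := hδdef ▸ le_trans (min_le_right _ _) (min_le_right _ _)
  clear_value δ
  -- key smallness facts
  have hsmall1 : δ * Ts * C4 ≤ amm / 2 := by
    have e2 : δ * (Ts * C4) ≤ δ1 * (Ts * C4) :=
      mul_le_mul_of_nonneg_right hδδ1 (by linarith only [mul_pos hTs0 hC40])
    linarith only [he1, e2, hδ10.le]
  have hsmall2 : δ * (Ts ^ 2 * KZ + CZ2) ≤ Ac / 2 := by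
    have e2 : δ * (Ts ^ 2 * KZ + CZ2) ≤ δ2 * (Ts ^ 2 * KZ + CZ2) :=
      mul_le_mul_of_nonneg_right hδδ2 hSZ0
    linarith only [he2, e2, hδ20.le]
  -- constants of the statement
  set b := aM ^ 2 + 1 with hbdef
  have hb0 : (0:ℝ) < b := by rw [hbdef]; positivity
  clear_value b
  set c₀ := min (δ * r1 / 4) (min (δ / 4) (Ac / (2 * Ts ^ 2))) with hc₀def
  have hc₀0 : 0 < c₀ := by
    rw [hc₀def]
    refine lt_min (by linarith only [mul_pos hδ0 hr1]) (lt_min (by linarith only [hδ0]) ?_)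
    exact div_pos hAc (by nlinarith only [hTs0])
  have hc₀X : c₀ ≤ δ * r1 / 4 := hc₀def ▸ min_le_left _ _
  have hc₀Y : c₀ ≤ δ / 4 := hc₀def ▸ le_trans (min_le_right _ _) (min_le_left _ _)
  have hc₀Z : c₀ ≤ Ac / (2 * Ts ^ 2) := hc₀def ▸ le_trans (min_le_right _ _) (min_le_right _ _)
  clear_value c₀
  set c := c₀ / b with hcdef
  have hc0 : 0 < c := hcdef ▸ div_pos hc₀0 hb0
  have hcb : c * b = c₀ := by rw [hcdef]; field_simp
  clear_value c
  set d := 1 + |Um| + |UM| + δ * Ts * C0 + c * Ts * |UM| + |A.trace| with hddef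
  have hdC0 : 0 ≤ δ * Ts * C0 := mul_nonneg (mul_nonneg hδ0.le hTs0.le) hC00
  have hdUM : 0 ≤ c * Ts * |UM| := mul_nonneg (mul_nonneg hc0.le hTs0.le) (abs_nonneg _)
  have hd0 : 0 < d := by
    rw [hddef]
    linarith only [abs_nonneg Um, abs_nonneg UM, abs_nonneg A.trace, hdC0, hdUM]
  have hdUm1 : |Um| ≤ d := by
    rw [hddef]
    linarith only [abs_nonneg UM, abs_nonneg A.trace, hdC0, hdUM]
  have hdUM1 : |UM| ≤ d := by
    rw [hddef]
    linarith only [abs_nonneg Um, abs_nonneg A.trace, hdC0, hdUM]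
  have hdrest : δ * Ts * C0 + c * Ts * |UM| + |A.trace| ≤ d := by
    rw [hddef]
    linarith only [abs_nonneg Um, abs_nonneg UM]
  clear_value d
  refine ⟨δ, hδ0, hδB, amm / 2, b, c, d,
    by linarith only [hamm0], hb0, hc0, hd0, ?_⟩
  intro t ht p
  have hTt0 : 0 < T t := hTpos t
  have hTtle : T t ≤ Ts := hle t ht
  set X := sqnorm p.1 with hXdef
  set Y := sqnorm p.2.1 with hYdef
  set Z := sqnorm p.2.2 with hZdef
  have hX0 : 0 ≤ X := hXdef ▸ sqnorm_nonneg _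
  have hY0 : 0 ≤ Y := hYdef ▸ sqnorm_nonneg _
  have hZ0 : 0 ≤ Z := hZdef ▸ sqnorm_nonneg _
  -- bounds on U
  have hUl : am ^ 2 * X + Um ≤ U p.1 := by
    refine le_trans ?_ (hUlow p.1)
    have h : am ^ 2 * X ≤ sqnorm (fun i => abar i * p.1 i) := by
      rw [hXdef, sqnorm, sqnorm, Finset.mul_sum]
      refine Finset.sum_le_sum fun i _ => ?_
      have key : am ^ 2 ≤ (abar i) ^ 2 := by nlinarith only [hamle i, ham0]
      nlinarith only [key, sq_nonneg (p.1 i)]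
    linarith only [h]
  have hUu : U p.1 ≤ aM ^ 2 * X + UM := by
    refine le_trans (hUup p.1) ?_
    have h : sqnorm (fun i => abar i * p.1 i) ≤ aM ^ 2 * X := by
      rw [hXdef, sqnorm, sqnorm, Finset.mul_sum]
      refine Finset.sum_le_sum fun i _ => ?_
      have key : (abar i) ^ 2 ≤ aM ^ 2 := by nlinarith only [haMge i, (habar i).le]
      nlinarith only [key, sq_nonneg (p.1 i)]
    linarith only [h]
  -- bounds on the cross terms in R
  have hLz : sqnorm (lamInv.mulVec p.2.2) ≤ F1 * Z := by
    rw [hF1def, hZdef]; exact sqnorm_mulVec_le lamInv p.2.2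
  have hcr1u : ∑ i, p.2.1 i * (lamInv.mulVec p.2.2) i ≤ Y / 2 + F1 * Z / 2 := by
    have h := sum_mul_le p.2.1 (lamInv.mulVec p.2.2) (ε := 1/2) (by norm_num)
    rw [← hYdef, show (4 * (1/2:ℝ)) = 2 by norm_num] at h
    linarith only [h, hLz]
  have hcr1l : -(Y / 2 + F1 * Z / 2) ≤ ∑ i, p.2.1 i * (lamInv.mulVec p.2.2) i := by
    have h := sum_mul_ge p.2.1 (lamInv.mulVec p.2.2) (ε := 1/2) (by norm_num)
    rw [← hYdef, show (4 * (1/2:ℝ)) = 2 by norm_num] at h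
    linarith only [h, hLz]
  have hcr2u : ∑ i, p.1 i * p.2.1 i ≤ X / 2 + Y / 2 := by
    have h := sum_mul_le p.1 p.2.1 (ε := 1/2) (by norm_num)
    rw [← hXdef, ← hYdef, show (4 * (1/2:ℝ)) = 2 by norm_num] at h
    linarith only [h]
  have hcr2l : -(X / 2 + Y / 2) ≤ ∑ i, p.1 i * p.2.1 i := by
    have h := sum_mul_ge p.1 p.2.1 (ε := 1/2) (by norm_num)
    rw [← hXdef, ← hYdef, show (4 * (1/2:ℝ)) = 2 by norm_num] at h
    linarith only [h]
  have hδT0 : 0 ≤ δ * T t := mul_nonneg hδ0.le hTt0.le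
  have hδTC4 : δ * T t * C4 ≤ amm / 2 := by
    have h1 : δ * T t ≤ δ * Ts := mul_le_mul_of_nonneg_left hTtle hδ0.le
    have h2 : δ * T t * C4 ≤ δ * Ts * C4 := mul_le_mul_of_nonneg_right h1 hC40.le
    linarith only [h2, hsmall1]
  -- two-sided quadratic bounds for R
  have hcrossU : δ * T t * ((∑ i, p.2.1 i * (lamInv.mulVec p.2.2) i)
      + (∑ i, p.1 i * p.2.1 i) / 2) ≤ amm / 2 * (X + Y + Z) := by
    have h1 : (∑ i, p.2.1 i * (lamInv.mulVec p.2.2) i) + (∑ i, p.1 i * p.2.1 i) / 2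
        ≤ C4 * (X + Y + Z) := by
      rw [hC4def]; nlinarith only [hcr1u, hcr2u, hF10, hX0, hY0, hZ0]
    calc δ * T t * ((∑ i, p.2.1 i * (lamInv.mulVec p.2.2) i) + (∑ i, p.1 i * p.2.1 i) / 2)
        ≤ δ * T t * (C4 * (X + Y + Z)) := mul_le_mul_of_nonneg_left h1 hδT0
      _ = (δ * T t * C4) * (X + Y + Z) := by ring
      _ ≤ amm / 2 * (X + Y + Z) :=
          mul_le_mul_of_nonneg_right hδTC4 (by linarith only [hX0, hY0, hZ0])
  have hcrossL : -(amm / 2 * (X + Y + Z)) ≤ δ * T t * ((∑ i, p.2.1 i * (lamInv.mulVec p.2.2) i)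
      + (∑ i, p.1 i * p.2.1 i) / 2) := by
    have h1 : -(C4 * (X + Y + Z)) ≤ (∑ i, p.2.1 i * (lamInv.mulVec p.2.2) i)
        + (∑ i, p.1 i * p.2.1 i) / 2 := by
      rw [hC4def]; nlinarith only [hcr1l, hcr2l, hF10, hX0, hY0, hZ0]
    calc -(amm / 2 * (X + Y + Z)) ≤ -((δ * T t * C4) * (X + Y + Z)) := by
          have := mul_le_mul_of_nonneg_right hδTC4
            (by linarith only [hX0, hY0, hZ0] : (0:ℝ) ≤ X + Y + Z)
          linarith only [this]
      _ = δ * T t * (-(C4 * (X + Y + Z))) := by ring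
      _ ≤ _ := mul_le_mul_of_nonneg_left h1 hδT0
  have hRexp : Rfun U lamInv δ (T t) p = U p.1 + Y / 2 + Z / 2
      + δ * T t * ((∑ i, p.2.1 i * (lamInv.mulVec p.2.2) i) + (∑ i, p.1 i * p.2.1 i) / 2) := by
    rw [Rfun, Wfun, hYdef, hZdef]
  have hRlow : amm / 2 * (X + Y + Z) - d ≤ Rfun U lamInv δ (T t) p := by
    rw [hRexp]
    have hUm1 : -|Um| ≤ Um := neg_abs_le Um
    nlinarith only [hcrossL, hUl, hamm1, hamm2, hX0, hY0, hZ0, hUm1, hdUm1]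
  have hRupAux : Rfun U lamInv δ (T t) p ≤ b * (X + Y + Z) + |UM| := by
    rw [hRexp]
    have hUM1 : UM ≤ |UM| := le_abs_self UM
    have hb' : aM ^ 2 * X + Y / 2 + Z / 2 + amm / 2 * (X + Y + Z) ≤ b * (X + Y + Z) := by
      rw [hbdef]; nlinarith only [hamm2, hamm0, hX0, hY0, hZ0, sq_nonneg aM]
    linarith only [hcrossU, hUu, hUM1, hb']
  have hRup : Rfun U lamInv δ (T t) p ≤ b * (X + Y + Z) + d := by
    linarith only [hRupAux, hdUM1]
  refine ⟨⟨hRlow, hRup⟩, ?_⟩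
  -- THE DRIFT INEQUALITY
  rw [genL_Rfun_eq U hUd A lam lamInv hlamInv δ (T t) hTt0.ne' p]
  set u := (T t)⁻¹ with hudef
  have hu0 : 0 < u := by rw [hudef]; exact inv_pos.mpr hTt0
  have huT : T t * u = 1 := by rw [hudef]; exact mul_inv_cancel₀ hTt0.ne'
  clear_value u
  have hTu : T t ≤ u * Ts ^ 2 := by
    have h1 : T t * T t ≤ Ts * Ts := mul_le_mul hTtle hTtle hTt0.le hTs0.le
    have h2 : u * (T t * T t) ≤ u * (Ts * Ts) := mul_le_mul_of_nonneg_left h1 hu0.le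
    have h3 : u * (T t * T t) = T t := by
      rw [show u * (T t * T t) = (T t * u) * T t by ring, huT, one_mul]
    linarith only [h2, h3]
  set g := gradp U p.1 with hgdef
  have hg2 : sqnorm g ≤ r2 * X + Ug := by rw [hgdef, hXdef]; exact hgrad2 p.1
  have hg1 : r1 * X - Ug ≤ ∑ i, g i * p.1 i := by rw [hgdef, hXdef]; exact hgrad1 p.1
  clear_value g
  set Lz := lamInv.mulVec p.2.2 with hLzdef
  set Ltz := lam.transpose.mulVec p.2.2 with hLtzdef
  set Atz := A.transpose.mulVec p.2.2 with hAtzdef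
  have hLz2 : sqnorm Lz ≤ F1 * Z := by
    rw [hLzdef, hF1def, hZdef]; exact sqnorm_mulVec_le lamInv p.2.2
  have hLtz2 : sqnorm Ltz ≤ F2t * Z := by
    rw [hLtzdef, hF2tdef, hZdef]; exact sqnorm_mulVec_le lam.transpose p.2.2
  have hAtz2 : sqnorm Atz ≤ FAt * Z := by
    rw [hAtzdef, hFAtdef, hZdef]; exact sqnorm_mulVec_le A.transpose p.2.2
  have hS4' : Ac * Z ≤ ∑ j, Atz j * p.2.2 j := by
    rw [hAtzdef, idB A p.2.2, hZdef]; exact hApd p.2.2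
  clear_value Lz Ltz Atz
  -- bound for -∑ g·Lz
  have he2r2 : ε2 * r2 = r1 / 8 := by rw [hε2def]; field_simp
  have hS2a : -(∑ i, g i * Lz i) ≤ r1 / 8 * X + ε2 * Ug + KZ2 * Z := by
    have h := sum_mul_ge g Lz hε2
    have hd1 : sqnorm Lz / (4 * ε2) ≤ KZ2 * Z := by
      calc sqnorm Lz / (4 * ε2) ≤ F1 * Z / (4 * ε2) :=
            (div_le_div_iff_of_pos_right (by linarith only [hε2])).mpr hLz2
        _ = KZ2 * Z := by rw [hKZ2def, div_mul_eq_mul_div]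
    have hd2 : ε2 * sqnorm g ≤ r1 / 8 * X + ε2 * Ug := by
      have h3 := mul_le_mul_of_nonneg_left hg2 hε2.le
      have h4 : ε2 * (r2 * X + Ug) = r1 / 8 * X + ε2 * Ug := by
        rw [mul_add, show ε2 * (r2 * X) = (ε2 * r2) * X by ring, he2r2]
      linarith only [h3, h4]
    linarith only [h, hd1, hd2]
  -- S2 splitting and total bound
  have hS2split : ∑ i, g i * (Lz i + p.1 i / 2)
      = (∑ i, g i * Lz i) + (∑ i, g i * p.1 i) / 2 := by
    rw [Finset.sum_congr rfl fun i (_ : i ∈ Finset.univ) =>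
      (by ring : g i * (Lz i + p.1 i / 2) = g i * Lz i + g i * p.1 i / 2),
      Finset.sum_add_distrib, Finset.sum_div]
  have hS2tot : -(∑ i, g i * (Lz i + p.1 i / 2))
      ≤ r1 / 8 * X + ε2 * Ug + KZ2 * Z - (r1 * X - Ug) / 2 := by
    linarith only [hS2split, hS2a, hg1]
  -- S3 bound
  have hS3b : ∑ i, Ltz i * Lz i ≤ F2t * Z / 2 + F1 * Z / 2 := by
    have h := sum_mul_le Ltz Lz (ε := 1/2) (by norm_num)
    rw [show (4 * (1/2:ℝ)) = 2 by norm_num] at h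
    linarith only [h, hLtz2, hLz2]
  have hS3c : ∑ i, Ltz i * p.1 i ≤ r1 / 4 * X + F2t * Z / r1 := by
    have h := sum_mul_le₂ Ltz p.1 (ε := r1/4) (by linarith only [hr1])
    rw [← hXdef, show (4 * (r1/4:ℝ)) = r1 by ring] at h
    have h2 : sqnorm Ltz / r1 ≤ F2t * Z / r1 := (div_le_div_iff_of_pos_right hr1).mpr hLtz2
    linarith only [h, h2]
  have hS3split : ∑ i, Ltz i * (Lz i + p.1 i / 2)
      = (∑ i, Ltz i * Lz i) + (∑ i, Ltz i * p.1 i) / 2 := by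
    rw [Finset.sum_congr rfl fun i (_ : i ∈ Finset.univ) =>
      (by ring : Ltz i * (Lz i + p.1 i / 2) = Ltz i * Lz i + Ltz i * p.1 i / 2),
      Finset.sum_add_distrib, Finset.sum_div]
  have hS3tot : ∑ i, Ltz i * (Lz i + p.1 i / 2) ≤ r1 / 8 * X + KZ3 * Z := by
    have heq : KZ3 * Z = F2t * Z / 2 + F1 * Z / 2 + F2t * Z / r1 / 2 := by
      rw [hKZ3def]; ring
    linarith only [hS3split, hS3b, hS3c, heq]
  -- S5 bound
  have hW : sqnorm (fun j => ∑ i, p.2.1 i * lamInv i j) ≤ F1t * Y := by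
    have e : (fun j => ∑ i, p.2.1 i * lamInv i j) = lamInv.transpose.mulVec p.2.1 := by
      funext j
      simp only [Matrix.mulVec, dotProduct, Matrix.transpose_apply]
      exact Finset.sum_congr rfl fun i _ => mul_comm _ _
    rw [e, hF1tdef, hYdef]; exact sqnorm_mulVec_le _ _
  set ε5 := T t / (8 * (F1t + 1)) with hε5def
  have hε50 : 0 < ε5 := by
    rw [hε5def]; exact div_pos hTt0 (by linarith only [hF1t0])
  have hε5F : ε5 * F1t ≤ T t / 8 := by
    rw [hε5def, div_mul_eq_mul_div, div_le_div_iff₀ (by linarith only [hF1t0]) (by norm_num : (0:ℝ) < 8)]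
    nlinarith only [hTt0.le, hF1t0]
  have hε5Z : FAt * Z / (4 * ε5) = u * CZ2 * Z := by
    rw [hε5def, hCZ2def, hudef]
    field_simp
    ring
  have hS5low : -(ε5 * sqnorm (fun j => ∑ i, p.2.1 i * lamInv i j) + sqnorm Atz / (4 * ε5))
      ≤ ∑ j, Atz j * (∑ i, p.2.1 i * lamInv i j) :=
    sum_mul_ge₂ Atz (fun j => ∑ i, p.2.1 i * lamInv i j) hε50
  have hS5tot : -(∑ j, Atz j * (∑ i, p.2.1 i * lamInv i j))
      ≤ T t / 8 * Y + u * CZ2 * Z := by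
    have h1 : ε5 * sqnorm (fun j => ∑ i, p.2.1 i * lamInv i j) ≤ ε5 * (F1t * Y) :=
      mul_le_mul_of_nonneg_left hW hε50.le
    have h2 : ε5 * (F1t * Y) ≤ T t / 8 * Y := by
      have := mul_le_mul_of_nonneg_right hε5F hY0
      calc ε5 * (F1t * Y) = (ε5 * F1t) * Y := by ring
        _ ≤ T t / 8 * Y := mul_le_mul_of_nonneg_right hε5F hY0
    have h3 : sqnorm Atz / (4 * ε5) ≤ FAt * Z / (4 * ε5) :=
      (div_le_div_iff_of_pos_right (by linarith only [hε50])).mpr hAtz2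
    linarith only [hS5low, h1, h2, h3, hε5Z]
  clear_value ε5
  -- abbreviate the five sums and conclude
  set Sy := ∑ i, p.2.1 i * p.2.1 i with hSydef
  set S2 := ∑ i, g i * (Lz i + p.1 i / 2) with hS2def
  set S3 := ∑ i, Ltz i * (Lz i + p.1 i / 2) with hS3def
  set S4 := ∑ j, Atz j * p.2.2 j with hS4def
  set S5 := ∑ j, Atz j * (∑ i, p.2.1 i * lamInv i j) with hS5def
  have hSyY : Sy = Y := by rw [hSydef, hYdef]; exact sum_self_eq_sqnorm _
  clear_value Sy S2 S3 S4 S5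
  rw [hSyY]
  -- multiplied bounds
  have K2 : δ * T t * (-S2) ≤ δ * T t * (r1 / 8 * X + ε2 * Ug + KZ2 * Z - (r1 * X - Ug) / 2) :=
    mul_le_mul_of_nonneg_left hS2tot hδT0
  have K3 : δ * T t * S3 ≤ δ * T t * (r1 / 8 * X + KZ3 * Z) :=
    mul_le_mul_of_nonneg_left hS3tot hδT0
  have K4 : u * (Ac * Z) ≤ u * S4 := mul_le_mul_of_nonneg_left hS4' hu0.le
  have K5 : δ * (-S5) ≤ δ * (T t / 8 * Y + u * CZ2 * Z) :=
    mul_le_mul_of_nonneg_left hS5tot hδ0.le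
  -- Z budget
  have hsmall2' : δ * (Ts ^ 2 * (KZ2 + KZ3) + CZ2) ≤ Ac / 2 := by
    rw [← hKZdef]; exact hsmall2
  have hZsc : δ * T t * (KZ2 + KZ3) + δ * u * CZ2 - u * Ac ≤ -(T t * (Ac / (2 * Ts ^ 2))) := by
    have p1 : δ * T t * (KZ2 + KZ3) ≤ δ * (u * Ts ^ 2) * (KZ2 + KZ3) :=
      mul_le_mul_of_nonneg_right (mul_le_mul_of_nonneg_left hTu hδ0.le)
        (by linarith only [hKZ20, hKZ30])
    have p3 : u * (δ * (Ts ^ 2 * (KZ2 + KZ3) + CZ2)) ≤ u * (Ac / 2) :=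
      mul_le_mul_of_nonneg_left hsmall2' hu0.le
    have p4 : T t * (Ac / (2 * Ts ^ 2)) ≤ u * Ts ^ 2 * (Ac / (2 * Ts ^ 2)) :=
      mul_le_mul_of_nonneg_right hTu
        (div_nonneg hAc.le (by nlinarith only [hTs0]))
    have p5 : u * Ts ^ 2 * (Ac / (2 * Ts ^ 2)) = u * (Ac / 2) := by
      field_simp
    linarith only [p1, p3, p4, p5]
  have hZbud : (δ * T t * (KZ2 + KZ3) + δ * u * CZ2 - u * Ac) * Z
      ≤ (-(T t * (Ac / (2 * Ts ^ 2)))) * Z := mul_le_mul_of_nonneg_right hZsc hZ0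
  -- budgets for c₀
  have hXb : T t * (c₀ * X) ≤ T t * (δ * r1 / 4 * X) :=
    mul_le_mul_of_nonneg_left (mul_le_mul_of_nonneg_right hc₀X hX0) hTt0.le
  have hYb : T t * (c₀ * Y) ≤ T t * (δ / 4 * Y) :=
    mul_le_mul_of_nonneg_left (mul_le_mul_of_nonneg_right hc₀Y hY0) hTt0.le
  have hZb2 : T t * (c₀ * Z) ≤ T t * (Ac / (2 * Ts ^ 2) * Z) :=
    mul_le_mul_of_nonneg_left (mul_le_mul_of_nonneg_right hc₀Z hZ0) hTt0.le
  -- comparison with R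
  have hRc : c * T t * Rfun U lamInv δ (T t) p ≤ c * T t * (b * (X + Y + Z) + |UM|) :=
    mul_le_mul_of_nonneg_left hRupAux (mul_nonneg hc0.le hTt0.le)
  have hceq : c * T t * (b * (X + Y + Z)) = T t * (c₀ * X) + T t * (c₀ * Y) + T t * (c₀ * Z) := by
    rw [← hcb]; ring
  have hTC0 : δ * T t * C0 ≤ δ * Ts * C0 :=
    mul_le_mul_of_nonneg_right (mul_le_mul_of_nonneg_left hTtle hδ0.le) hC00
  have hcTUM : c * T t * |UM| ≤ c * Ts * |UM| :=
    mul_le_mul_of_nonneg_right (mul_le_mul_of_nonneg_left hTtle hc0.le) (abs_nonneg _)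
  have hC0col : δ * T t * (ε2 * Ug) + δ * T t * (Ug / 2) = δ * T t * C0 := by
    rw [hC0def]; ring
  have htr : A.trace ≤ |A.trace| := le_abs_self _
  have hδTY : 0 ≤ δ * T t * Y := mul_nonneg hδT0 hY0
  linarith only [K2, K3, K4, K5, hZbud, hXb, hYb, hZb2, hRc, hceq, hTC0, hcTUM,
    hC0col, htr, hδTY, hdrest]
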